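/- arXiv:math/0103189 — 3 statements merged into one kernel-verified Lean document; each statement's English description precedes it below -/
import Mathlib

section
/- A finite undirected graph G (multiple edges and at most one self-loop per vertex allowed) admits a sink-free orientation if and only if no connected component of G is a tree. -/
open MeasureTheory ProbabilityTheory
open scoped ENNReal

namespace SinkPopping

variable {V E : Type} [Fintype V] [Fintype E] [DecidableEq V] [DecidableEq E]

/-- The orientations of the edge `e`: pairs `p = (tail, head)` whose unordered pair of
coordinates is the pair of endpoints of `e`.  The edge is oriented as pointing from
`p.1` (its tail) to `p.2` (its head).  A self-loop has exactly one orientation, any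
other edge has exactly two. -/
abbrev EdgeOrient (ends : E → Sym2 V) (e : E) : Type :=
  {p : V × V // ends e = s(p.1, p.2)}

/-- An orientation of the multigraph on vertices `V` with edges `E` whose endpoint map is
`ends` is a choice of orientation for each edge. -/
def Orientation (ends : E → Sym2 V) : Type :=
  ∀ e, EdgeOrient ends e

/-- A vertex is a sink (for the orientation `o`) if it is the tail of no edge. -/
def IsSink (ends : E → Sym2 V) (o : Orientation ends) (v : V) : Prop :=
  ∀ e, ((o e : V × V)).1 ≠ v

/-- A vertex is a source (for the orientation `o`) if it is the head of no edge. -/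
def IsSource (ends : E → Sym2 V) (o : Orientation ends) (v : V) : Prop :=
  ∀ e, ((o e : V × V)).2 ≠ v

/-- A sink-free orientation. -/
def IsSFO (ends : E → Sym2 V) (o : Orientation ends) : Prop :=
  ∀ v, ¬ IsSink ends o v

instance (ends : E → Sym2 V) (o : Orientation ends) (v : V) : Decidable (IsSink ends o v) :=
  inferInstanceAs (Decidable (∀ e, ((o e : V × V)).1 ≠ v))

instance (ends : E → Sym2 V) (o : Orientation ends) : Decidable (IsSFO ends o) :=
  inferInstanceAs (Decidable (∀ v, ¬ IsSink ends o v))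

/-- Two vertices are adjacent (neighbors) if some edge has them as its endpoints. -/
def Adj (ends : E → Sym2 V) (a b : V) : Prop :=
  ∃ e, ends e = s(a, b)

/-- There is at most one self-loop at each vertex (multiple self-loops play no role
in sink-free orientations). -/
def OneLoopPerVertex (ends : E → Sym2 V) : Prop :=
  ∀ e e' : E, (ends e).IsDiag → ends e = ends e' → e = e'

/-- `vs, es` form a cycle of length `n ≥ 1` in the multigraph: distinct vertices
`v_0, …, v_{n-1}`, distinct edges `e_0, …, e_{n-1}`, with `e_i` joining `v_i` to `v_{i+1}`
(indices mod `n`).  A `1`-cycle is a vertex with a self-loop, a `2`-cycle is a pair of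
parallel edges. -/
def IsCycleIn (ends : E → Sym2 V) (n : ℕ) (vs : ZMod n → V) (es : ZMod n → E) : Prop :=
  0 < n ∧ Function.Injective vs ∧ Function.Injective es ∧
    ∀ i, ends (es i) = s(vs i, vs (i + 1))

/-- Reachability: the reflexive-transitive closure of adjacency.  The connected component
of `v` is the set of vertices reachable from `v`. -/
def Reachable (ends : E → Sym2 V) : V → V → Prop :=
  Relation.ReflTransGen (Adj ends)

/-- The connected component of `v` contains a cycle; for a component (which is connected
by definition) this says exactly that the component is not a tree. -/
def ComponentHasCycle (ends : E → Sym2 V) (v : V) : Prop :=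
  ∃ (n : ℕ) (vs : ZMod n → V) (es : ZMod n → E),
    IsCycleIn ends n vs es ∧ ∀ i, Reachable ends v (vs i)

/-- The class `S` of graphs in which no connected component is a tree, i.e. every
connected component contains a cycle. -/
def InS (ends : E → Sym2 V) : Prop :=
  ∀ v : V, ComponentHasCycle ends v

/-- The class `S₀` of graphs in which every vertex lies in some cycle. -/
def InS₀ (ends : E → Sym2 V) : Prop :=
  ∀ v : V, ∃ (n : ℕ) (vs : ZMod n → V) (es : ZMod n → E),
    IsCycleIn ends n vs es ∧ ∃ i, vs i = v

/-- `G` is (isomorphic to) the `n`-cycle:  vertices `v_0, …, v_{n-1}` and for each `i` an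
edge joining `v_i` to `v_{i+1}` (indices mod `n`).  The `1`-cycle is a vertex with a
self-loop. -/
def IsCycleGraph (ends : E → Sym2 V) : Prop :=
  ∃ (n : ℕ) (_ : 0 < n) (fV : V ≃ ZMod n) (fE : E ≃ ZMod n),
    ∀ e, ends e = s(fV.symm (fE e), fV.symm (fE e + 1))

/-- `G` is (isomorphic to) the `n`-lollipop: a path `v_0, …, v_{n-1}` with the `n-1` edges
`v_i v_{i+1}`, together with a self-loop at the end `v_{n-1}`. -/
def IsLollipopGraph (ends : E → Sym2 V) : Prop :=
  ∃ (n : ℕ) (hn : 0 < n) (fV : V ≃ Fin n) (fE : E ≃ Fin n),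
    ∀ e, ends e = s(fV.symm (fE e),
      fV.symm (if h : ((fE e : ℕ) + 1) < n then ⟨(fE e : ℕ) + 1, h⟩ else fE e))

/-- A stack configuration: an infinite stack of orientations of each edge;
`ω e k` is the `k`-th orientation in the stack under the edge `e`. -/
def PopSpace (ends : E → Sym2 V) : Type :=
  ∀ e, ℕ → EdgeOrient ends e

/-- The orientation showing after the vertices in the list `l` have been popped (in order):
the stack of the edge `e` has been advanced once for every entry of `l` incident to `e`. -/
def orientAfter (ends : E → Sym2 V) (ω : PopSpace ends) (l : List V) : Orientation ends :=
  fun e => ω e (l.countP (fun v => decide (v ∈ ends e)))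

/-- `l` is a legal popping sequence for `ω`: each entry is a sink in the orientation
showing after the previous entries have been popped. -/
def IsLegal (ends : E → Sym2 V) (ω : PopSpace ends) (l : List V) : Prop :=
  ∀ (i : ℕ) (h : i < l.length),
    IsSink ends (orientAfter ends ω (l.take i)) (l.get ⟨i, h⟩)

/-- A finite maximal popping sequence: a legal popping sequence that cannot be extended
(equivalently, one that results in a sink-free orientation). -/
def IsMaximal (ends : E → Sym2 V) (ω : PopSpace ends) (l : List V) : Prop :=
  IsLegal ends ω l ∧ ∀ v, ¬ IsLegal ends ω (l ++ [v])

/-- An infinite legal popping sequence (such a sequence is automatically maximal). -/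
def IsLegalInf (ends : E → Sym2 V) (ω : PopSpace ends) (s : ℕ → V) : Prop :=
  ∀ i, IsSink ends (orientAfter ends ω ((List.range i).map s)) (s i)

/-- A choice rule: whenever there is a sink, `C` selects one. -/
def IsChoiceRule (ends : E → Sym2 V) (C : Orientation ends → V) : Prop :=
  ∀ o : Orientation ends, (∃ v, IsSink ends o v) → IsSink ends o (C o)

/-- Sink popping, run with the choice rule `C` on the stacks `ω`: `runPop ends C ω k` is the
list of vertices popped in the first `k` steps (popping stops once the current orientation
is sink-free). -/
def runPop (ends : E → Sym2 V) (C : Orientation ends → V) (ω : PopSpace ends) : ℕ → List V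
  | 0 => []
  | (k + 1) =>
      let l := runPop ends C ω k
      if IsSFO ends (orientAfter ends ω l) then l
      else l ++ [C (orientAfter ends ω l)]

/-- The number of pops made by sink popping before a sink-free orientation is reached
(`⊤` if popping goes on forever). -/
noncomputable def stopTime (ends : E → Sym2 V) (C : Orientation ends → V)
    (ω : PopSpace ends) : ℕ∞ :=
  sInf ((fun m : ℕ => (m : ℕ∞)) ''
    {m | IsSFO ends (orientAfter ends ω (runPop ends C ω m))})

/-- `Q(G, v)`: the number of times the vertex `v` is popped during sink popping. -/
noncomputable def popCount (ends : E → Sym2 V) (C : Orientation ends → V)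
    (ω : PopSpace ends) (v : V) : ℕ∞ :=
  ⨆ k, ((runPop ends C ω k).count v : ℕ∞)

/-- The initial orientation (the top of all the stacks). -/
def initOrient (ends : E → Sym2 V) (ω : PopSpace ends) : Orientation ends :=
  fun e => ω e 0

instance (ends : E → Sym2 V) (e : E) : Nonempty (EdgeOrient ends e) := by
  obtain ⟨a, b, h⟩ : ∃ a b, ends e = s(a, b) :=
    Sym2.ind (fun a b => ⟨a, b, rfl⟩) (ends e)
  exact ⟨⟨(a, b), h⟩⟩

instance (ends : E → Sym2 V) (e : E) : MeasurableSpace (EdgeOrient ends e) := ⊤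

instance (ends : E → Sym2 V) : MeasurableSpace (PopSpace ends) := by
  unfold PopSpace; infer_instance

/-- The stacks `{X_{e,k} = ω e k : e ∈ E, k ≥ 0}` are independent under `P`, and each
`X_{e,k}` is uniformly distributed over the orientations of the edge `e`. -/
def StacksIID (ends : E → Sym2 V) (P : Measure (PopSpace ends)) : Prop :=
  iIndepFun (m := fun p : E × ℕ => (inferInstance : MeasurableSpace (EdgeOrient ends p.1)))
      (fun (p : E × ℕ) (ω : PopSpace ends) => ω p.1 p.2) P
    ∧ ∀ (e : E) (k : ℕ),
        P.map (fun ω : PopSpace ends => ω e k)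
          = (PMF.uniformOfFintype (EdgeOrient ends e)).toMeasure

/-- The number of sink-free orientations of the graph. -/
noncomputable def NumSFO (ends : E → Sym2 V) : ℕ :=
  Nat.card {o : Orientation ends // IsSFO ends o}


/-- `u` is a leaf: a vertex of degree 1, i.e. `u` is incident to exactly one edge,
which is not a self-loop. -/
def IsLeaf (ends : E → Sym2 V) (u : V) : Prop :=
  (∃! e, u ∈ ends e) ∧ ∀ e, u ∈ ends e → ¬ (ends e).IsDiag

lemma adj_symm' (ends : E → Sym2 V) : Symmetric (Adj ends) :=
  fun _ _ ⟨e, h⟩ => ⟨e, h.trans Sym2.eq_swap⟩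

lemma reachable_of_mem_mem (ends : E → Sym2 V) {e : E} {a b : V}
    (ha : a ∈ ends e) (hb : b ∈ ends e) : Reachable ends a b := by
  obtain ⟨x, y, hxy⟩ : ∃ x y, ends e = s(x, y) :=
    Sym2.ind (fun x y => ⟨x, y, rfl⟩) (ends e)
  have hadj : ∀ {u w : V}, ends e = s(u, w) → Reachable ends u w :=
    fun h => Relation.ReflTransGen.single ⟨e, h⟩
  rcases Sym2.mem_iff.mp (hxy ▸ ha) with rfl | rfl <;>
    rcases Sym2.mem_iff.mp (hxy ▸ hb) with rfl | rfl
  · exact Relation.ReflTransGen.refl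
  · exact hadj hxy
  · exact hadj (hxy.trans Sym2.eq_swap)
  · exact Relation.ReflTransGen.refl

lemma chain_of_reachable (ends : E → Sym2 V) {a b : V} (h : Reachable ends a b) :
    ∃ (m : ℕ) (g : ℕ → V), g 0 = a ∧ g m = b ∧ ∀ k < m, Adj ends (g k) (g (k + 1)) := by
  induction h with
  | refl => exact ⟨0, fun _ => a, rfl, rfl, by omega⟩
  | @tail x c hax hxc ih =>
    obtain ⟨m, g, hg0, hgm, hk⟩ := ih
    refine ⟨m + 1, fun k => if k ≤ m then g k else c, ?_, ?_, ?_⟩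
    · simpa using hg0
    · simp
    · intro k hkm
      rcases Nat.lt_or_ge k m with hk' | hk'
      · simpa [Nat.le_of_lt hk', Nat.succ_le_of_lt hk'] using hk k hk'
      · have hkm' : k = m := by omega
        subst hkm'
        simpa [hgm] using hxc

lemma sfo_of_inj (ends : E → Sym2 V) (f : V → E) (hinj : Function.Injective f)
    (hmem : ∀ v, v ∈ ends (f v)) : ∃ o : Orientation ends, IsSFO ends o := by
  classical
  have horient : ∀ e : E, ∃ p : EdgeOrient ends e, (∃ v, f v = e) → f ((p : V × V)).1 = e := by
    intro e
    by_cases h : ∃ v, f v = e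
    · obtain ⟨v, rfl⟩ := h
      have hm : v ∈ ends (f v) := hmem v
      exact ⟨⟨(v, Sym2.Mem.other hm), (Sym2.other_spec hm).symm⟩, fun _ => rfl⟩
    · exact ⟨Classical.arbitrary _, fun hv => absurd hv h⟩
  choose o hso using horient
  refine ⟨o, fun v hsink => ?_⟩
  exact hsink (f v) (hinj (hso (f v) ⟨v, rfl⟩))

lemma componentHasCycle_of_sfo (ends : E → Sym2 V) (o : Orientation ends)
    (ho : IsSFO ends o) (v : V) : ComponentHasCycle ends v := by
  classical
  have hex : ∀ w : V, ∃ e, ((o e : V × V)).1 = w := by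
    intro w
    by_contra h
    push_neg at h
    exact ho w h
  choose f hf using hex
  have hfinj : Function.Injective f := fun a b h => by rw [← hf a, ← hf b, h]
  obtain ⟨step, hstep⟩ : ∃ step : V → V, ∀ w, ends (f w) = s(w, step w) := by
    refine ⟨fun w => ((o (f w) : V × V)).2, fun w => ?_⟩
    have h := (o (f w)).property
    rwa [hf w] at h
  obtain ⟨g, hg0, hgs⟩ : ∃ g : ℕ → V, g 0 = v ∧ ∀ k, g (k + 1) = step (g k) :=
    ⟨fun k => step^[k] v, rfl, fun k => Function.iterate_succ_apply' step k v⟩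
  have hreach : ∀ m, Reachable ends v (g m) := by
    intro m
    induction m with
    | zero => rw [hg0]; exact Relation.ReflTransGen.refl
    | succ k ih => exact ih.tail ⟨f (g k), by rw [hstep (g k), hgs k]⟩
  obtain ⟨x, y, hxy, hgxy⟩ := Finite.exists_ne_map_eq_of_infinite g
  have hj : ∃ j, ∃ i, i < j ∧ g i = g j := by
    rcases lt_or_gt_of_ne hxy with h | h
    exacts [⟨y, x, h, hgxy⟩, ⟨x, y, h, hgxy.symm⟩]
  obtain ⟨i, hij, hgij⟩ := Nat.find_spec hj
  set j := Nat.find hj with hjdef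
  have hmin : ∀ a b, a < b → b < j → g a ≠ g b := by
    intro a b hab hbj hgab
    exact Nat.find_min hj hbj ⟨a, hab, hgab⟩
  set n := j - i with hndef
  have hn : 0 < n := by omega
  haveI : NeZero n := ⟨hn.ne'⟩
  have hin : i + n = j := by omega
  have hper : g (i + n) = g i := by rw [hin]; exact hgij.symm
  have hval : ∀ k : ZMod n, g (i + (k + 1).val) = g (i + k.val + 1) := by
    intro k
    have hklt : k.val < n := ZMod.val_lt k
    rcases Nat.lt_or_ge (k.val + 1) n with hlt | hge
    · have : (k + 1).val = k.val + 1 := by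
        rw [ZMod.val_add, ZMod.val_one_eq_one_mod]
        have h1 : 1 % n = 1 := Nat.mod_eq_of_lt (by omega)
        rw [h1, Nat.mod_eq_of_lt hlt]
      rw [this, ← Nat.add_assoc]
    · have hkn : k.val + 1 = n := by omega
      have : (k + 1).val = 0 := by
        rw [ZMod.val_add, ZMod.val_one_eq_one_mod]
        rcases Nat.lt_or_ge 1 n with h1 | h1
        · rw [Nat.mod_eq_of_lt h1, hkn, Nat.mod_self]
        · have hn1 : n = 1 := by omega
          have h10 : 1 % n = 0 := by rw [hn1]
          have hk0 : k.val = 0 := by omega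
          rw [h10, hk0]
          simp
      rw [this]
      have : i + k.val + 1 = i + n := by omega
      rw [this, hper]
      simp
  set vs : ZMod n → V := fun k => g (i + k.val) with hvs
  set es : ZMod n → E := fun k => f (vs k) with hes
  have hvs_inj : Function.Injective vs := by
    intro a b hab
    by_contra hne
    have hvne : a.val ≠ b.val := fun h => hne (ZMod.val_injective n h)
    have hva : a.val < n := ZMod.val_lt a
    have hvb : b.val < n := ZMod.val_lt b
    rcases Nat.lt_or_ge a.val b.val with h | h
    · exact hmin (i + a.val) (i + b.val) (by omega) (by omega) hab
    · exact hmin (i + b.val) (i + a.val) (by omega) (by omega) hab.symm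
  have hends : ∀ k : ZMod n, ends (es k) = s(vs k, vs (k + 1)) := by
    intro k
    have h1 : vs (k + 1) = step (vs k) := by
      show g (i + (k + 1).val) = step (g (i + k.val))
      rw [hval k, hgs (i + k.val)]
    rw [hes, hstep (vs k), h1]
  exact ⟨n, vs, es, ⟨hn, hvs_inj, hfinj.comp hvs_inj, hends⟩, fun k => hreach (i + k.val)⟩

/-- A finite undirected multigraph admits a sink-free orientation if and
only if no connected component of it is a tree, i.e. iff every connected component
contains a cycle. -/
theorem exists_sfo_iff_no_tree_component
    (ends : E → Sym2 V) (hloop : OneLoopPerVertex ends) :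
    (∃ o : Orientation ends, IsSFO ends o) ↔ ∀ v : V, ComponentHasCycle ends v := by
  classical
  constructor
  · rintro ⟨o, ho⟩ v
    exact componentHasCycle_of_sfo ends o ho v
  · intro hS
    -- Build an injective `f : V → E` with `v ∈ ends (f v)`.
    have hsymm : Symmetric (Reachable ends) :=
      fun a b h => (@Relation.ReflTransGen.stdSymm V (Adj ends) ⟨adj_symm' ends⟩).symm a b h
    let s : Setoid V := ⟨Reachable ends,
      ⟨fun _ => Relation.ReflTransGen.refl, fun h => hsymm h, fun h h' => h.trans h'⟩⟩
    let rep : V → V := fun v => (Quotient.mk s v).out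
    have hrep_reach : ∀ v, Reachable ends v (rep v) := by
      intro v
      exact hsymm (@Quotient.exact V s _ _ (Quotient.out_eq (Quotient.mk s v)))
    have hrep_eq : ∀ {a b : V}, Reachable ends a b → rep a = rep b := by
      intro a b h
      exact congrArg Quotient.out (Quotient.sound (s := s) h)
    choose n vs es hcyc hreach using hS
    set C : Set V := {w | ∃ i, vs (rep w) i = w} with hC
    -- distance to the cycle of the component
    set P : V → ℕ → Prop := fun v m => ∃ g : ℕ → V, g 0 = v ∧ g m ∈ C ∧
      ∀ k < m, Adj ends (g k) (g (k + 1)) with hPdef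
    have hP : ∀ v, ∃ m, P v m := by
      intro v
      have hpos : 0 < n (rep v) := (hcyc (rep v)).1
      haveI : NeZero (n (rep v)) := ⟨hpos.ne'⟩
      set c := vs (rep v) 0 with hc
      have hvc : Reachable ends v c := (hrep_reach v).trans (hreach (rep v) 0)
      have hcC : c ∈ C := by
        have hrc : rep c = rep v := (hrep_eq hvc).symm
        show ∃ i, vs (rep c) i = c
        rw [hrc]
        exact ⟨0, hc.symm⟩
      obtain ⟨m, g, hg0, hgm, hadj⟩ := chain_of_reachable ends hvc
      exact ⟨m, g, hg0, hgm ▸ hcC, hadj⟩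
    set d : V → ℕ := fun v => Nat.find (hP v) with hd
    have hstep : ∀ v ∉ C, ∃ w e, ends e = s(v, w) ∧ d w < d v := by
      intro v hv
      have hspec : P v (d v) := Nat.find_spec (hP v)
      obtain ⟨g, hg0, hgm, hadj⟩ := hspec
      have hd0 : d v ≠ 0 := by
        intro h0
        rw [h0] at hgm
        exact hv (hg0 ▸ hgm)
      obtain ⟨e, he⟩ := hadj 0 (by omega)
      refine ⟨g 1, e, hg0 ▸ he, ?_⟩
      have hPw : P (g 1) (d v - 1) := by
        refine ⟨fun k => g (k + 1), rfl, ?_, fun k hk => hadj (k + 1) (by omega)⟩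
        show g (d v - 1 + 1) ∈ C
        have heq : d v - 1 + 1 = d v := by omega
        rw [heq]
        exact hgm
      have hle : d (g 1) ≤ d v - 1 := Nat.find_le hPw
      omega
    have key : ∀ v : V, ∃ e : E, v ∈ ends e ∧
        ((∃ i, vs (rep v) i = v ∧ es (rep v) i = e) ∨
          (v ∉ C ∧ ∃ w, ends e = s(v, w) ∧ d w < d v)) := by
      intro v
      by_cases hv : v ∈ C
      · obtain ⟨i, hi⟩ := hv
        refine ⟨es (rep v) i, ?_, Or.inl ⟨i, hi, rfl⟩⟩
        rw [(hcyc (rep v)).2.2.2 i, hi]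
        exact Sym2.mem_mk_left _ _
      · obtain ⟨w, e, he, hdw⟩ := hstep v hv
        exact ⟨e, by rw [he]; exact Sym2.mem_mk_left _ _, Or.inr ⟨hv, w, he, hdw⟩⟩
    choose f hf1 hf2 using key
    -- transport helpers
    have inl_case : ∀ (r r' : V) (i : ZMod (n r)) (j : ZMod (n r')),
        r = r' → es r i = es r' j → vs r i = vs r' j := by
      rintro r r' i j rfl h
      exact congrArg (vs r) ((hcyc r).2.2.1 h)
    have memC_of : ∀ (r : V) (k : ZMod (n r)) (b : V), r = rep b → vs r k = b → b ∈ C := by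
      rintro r k b rfl h
      exact ⟨k, h⟩
    -- mixed case: a on cycle, b not in C, f a = f b implies a = b
    have hmix : ∀ a b : V, f a = f b →
        (∃ i, vs (rep a) i = a ∧ es (rep a) i = f a) →
        (b ∉ C ∧ ∃ w, ends (f b) = s(b, w) ∧ d w < d b) → a = b := by
      rintro a b hab ⟨i, hia, hiea⟩ ⟨hbC, w, hew, -⟩
      have hendsa : ends (f a) = s(a, vs (rep a) (i + 1)) := by
        rw [← hiea, (hcyc (rep a)).2.2.2 i, hia]
      by_contra hne
      have heq : s(a, vs (rep a) (i + 1)) = s(b, w) := by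
        rw [← hendsa, hab, hew]
      rcases Sym2.eq_iff.mp heq with ⟨h1, h2⟩ | ⟨h1, h2⟩
      · exact hne h1
      · -- b = vs (rep a) (i+1), so b ∈ C
        have hbmem : b ∈ ends (f a) := by
          rw [hendsa, h2]
          exact Sym2.mem_mk_right _ _
        have hamem : a ∈ ends (f a) := hf1 a
        have hab' : Reachable ends a b := reachable_of_mem_mem ends hamem hbmem
        exact hbC (memC_of (rep a) (i + 1) b (hrep_eq hab') h2)
    have hfinj : Function.Injective f := by
      intro a b hab
      rcases hf2 a with ha | ha <;> rcases hf2 b with hb | hb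
      · -- both on cycles
        obtain ⟨i, hia, hiea⟩ := ha
        obtain ⟨j, hjb, hjeb⟩ := hb
        have hamem : a ∈ ends (f a) := hf1 a
        have hbmem : b ∈ ends (f a) := hab ▸ hf1 b
        have hr : rep a = rep b := hrep_eq (reachable_of_mem_mem ends hamem hbmem)
        have : vs (rep a) i = vs (rep b) j :=
          inl_case (rep a) (rep b) i j hr (by rw [hiea, hjeb, hab])
        rw [hia, hjb] at this
        exact this
      · exact hmix a b hab ha hb
      · exact (hmix b a hab.symm hb ha).symm
      · obtain ⟨haC, wa, hea, hda⟩ := ha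
        obtain ⟨hbC, wb, heb, hdb⟩ := hb
        have heq : s(a, wa) = s(b, wb) := by rw [← hea, hab, heb]
        rcases Sym2.eq_iff.mp heq with ⟨h1, h2⟩ | ⟨h1, h2⟩
        · exact h1
        · subst h1
          subst h2
          omega
    exact sfo_of_inj ends f hfinj hf1



end SinkPopping
end

section
/- (Deterministic strong Markov property) Fix stacks X_{e,k} of orientations, an integer j, and vertices v_0, …, v_{j−1} forming a legal popping sequence for the stack configuration ω. Define the shifted configuration ω' by X_{e,k}(ω') = X_{e, k + f(e,j)}(ω), where f(e,j) is the number of indices i < j with v_i incident to e. Then for any k ≤ ∞, the set of sequences (v_{j}, …, v_{j+k−1}) for which v_0, …, v_{j+k−1} is a legal popping sequence for ω equals the set of legal popping sequences of length k for ω'; moreover if v_0, …, v_{j+k−1} is maximal for ω then v_j, …, v_{j+k−1} is maximal for ω', and (when k < ∞) both leave the same sink-free orientation. -/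
open MeasureTheory ProbabilityTheory
open scoped ENNReal

namespace SinkPopping

variable {V E : Type} [Fintype V] [Fintype E] [DecidableEq V] [DecidableEq E]

/-- Deterministic strong Markov property.  Let `l₀ = v_0, …, v_{j-1}`
be a legal popping sequence for the stack configuration `ω`, and let `ω'` be the shifted
configuration `X_{e,k}(ω') = X_{e, k + f(e,j)}(ω)`.  Then a sequence `l` extends `l₀` to
a legal popping sequence of `ω` iff `l` is a legal popping sequence of `ω'` (and the same
for infinite sequences `s`); moreover if `l₀ ++ l` is maximal for `ω` then `l` is maximal
for `ω'` and both leave the same sink-free orientation. -/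
theorem deterministic_strong_markov
    (ends : E → Sym2 V) (hloop : OneLoopPerVertex ends)
    (ω ω' : PopSpace ends) (l₀ : List V) (h₀ : IsLegal ends ω l₀)
    (hω' : ∀ e k, ω' e k = ω e (k + l₀.countP (fun v => decide (v ∈ ends e)))) :
    (∀ l : List V, IsLegal ends ω (l₀ ++ l) ↔ IsLegal ends ω' l) ∧
    (∀ l : List V, IsMaximal ends ω (l₀ ++ l) →
      IsMaximal ends ω' l ∧ orientAfter ends ω (l₀ ++ l) = orientAfter ends ω' l) ∧
    (∀ s : ℕ → V,
      IsLegalInf ends ω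
          (fun i => if h : i < l₀.length then l₀.get ⟨i, h⟩ else s (i - l₀.length))
        ↔ IsLegalInf ends ω' s) := by
  -- Key fact: the orientation after `l₀ ++ l` under `ω` equals that after `l` under `ω'`.
  have key : ∀ l : List V, orientAfter ends ω (l₀ ++ l) = orientAfter ends ω' l := by
    intro l
    funext e
    simp only [orientAfter, List.countP_append, hω', Nat.add_comm]
  have hj := l₀.length
  -- the forward/backward legal equivalence
  have legal : ∀ l : List V, IsLegal ends ω (l₀ ++ l) ↔ IsLegal ends ω' l := by
    intro l
    constructor
    · intro h i hi
      have h2 : l₀.length + i < (l₀ ++ l).length := by simp; omega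
      have := h (l₀.length + i) h2
      rwa [List.take_length_add_append, key, show (l₀ ++ l).get ⟨l₀.length + i, h2⟩ = l.get ⟨i, hi⟩ by
        simp [List.getElem_append_right]] at this
    · intro h i hi
      rcases lt_or_ge i l₀.length with hlt | hge
      · have := h₀ i hlt
        rwa [show (l₀ ++ l).take i = l₀.take i from List.take_append_of_le_length hlt.le,
          show (l₀ ++ l).get ⟨i, hi⟩ = l₀.get ⟨i, hlt⟩ by
            simp [List.get_eq_getElem, List.getElem_append_left hlt]]
      · obtain ⟨m, rfl⟩ := Nat.exists_eq_add_of_le hge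
        have hm : m < l.length := by simp at hi; omega
        have := h m hm
        rw [show (l₀ ++ l).get ⟨l₀.length + m, hi⟩ = l.get ⟨m, hm⟩
          by simp [List.getElem_append_right]]
        rwa [← key, ← List.take_length_add_append] at this
  refine ⟨legal, ?_, ?_⟩
  · intro l hmax
    refine ⟨⟨(legal l).mp hmax.1, fun v hv => hmax.2 v ?_⟩, key l⟩
    rw [show l₀ ++ l ++ [v] = l₀ ++ (l ++ [v]) by simp]
    exact (legal (l ++ [v])).mpr hv
  · intro s
    set s' : ℕ → V := fun i => if h : i < l₀.length then l₀.get ⟨i, h⟩ else s (i - l₀.length)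
      with hs'
    have hrange : ∀ i, (List.range (l₀.length + i)).map s' = l₀ ++ (List.range i).map s := by
      intro i
      rw [List.range_add, List.map_append, List.map_map]
      congr 1
      · refine List.ext_getElem (by simp) (fun n h₁ h₂ => ?_)
        simp only [List.getElem_map, List.getElem_range]
        simp only [s']
        rw [dif_pos (by simpa using h₂)]
        simp
      · refine List.ext_getElem (by simp) (fun n h₁ h₂ => ?_)
        simp only [List.getElem_map, List.getElem_range, Function.comp_apply]
        simp only [s']
        rw [dif_neg (by omega)]
        congr 1
        omega
    have hs'val : ∀ i, s' (l₀.length + i) = s i := by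
      intro i
      simp only [s']
      rw [dif_neg (by omega)]
      congr 1
      omega
    constructor
    · intro h i
      have := h (l₀.length + i)
      rwa [hrange, key, hs'val] at this
    · intro h i
      rcases lt_or_ge i l₀.length with hlt | hge
      · have := h₀ i hlt
        have heq : (List.range i).map s' = l₀.take i := by
          refine List.ext_getElem (by simp; omega) (fun n h₁ h₂ => ?_)
          simp only [List.getElem_map, List.getElem_range, List.getElem_take]
          simp only [s']
          rw [dif_pos (by simp at h₁; omega)]
          simp
        rw [heq]
        simpa only [s', dif_pos hlt] using this
      · obtain ⟨m, rfl⟩ := Nat.exists_eq_add_of_le hge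
        have := h m
        rw [hrange, key, hs'val]
        exact this


end SinkPopping
end

section
/- For any fixed stack configuration ω, the set of maximal popping sequences for ω is exactly one equivalence class under the relation generated by transposing consecutive entries (v_i, v_{i+1}) that are not neighbors in G. -/
open MeasureTheory ProbabilityTheory
open scoped ENNReal

namespace SinkPopping

variable {V E : Type} [Fintype V] [Fintype E] [DecidableEq V] [DecidableEq E]

/-- A possibly infinite sequence of vertices (a potential popping sequence). -/
inductive PopSeq (V : Type) where
  | fin : List V → PopSeq V
  | inf : (ℕ → V) → PopSeq V

/-- One transposition of a pair of consecutive entries of a finite sequence which are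
not neighbors in the graph. -/
def SwapStep (ends : E → Sym2 V) (l l' : List V) : Prop :=
  ∃ (l₁ : List V) (a b : V) (l₂ : List V),
    ¬ Adj ends a b ∧ l = l₁ ++ a :: b :: l₂ ∧ l' = l₁ ++ b :: a :: l₂

/-- Two finite sequences are equivalent if one can be changed into the other by a
sequence of transpositions of consecutive entries that are not neighbors in `G`. -/
def ListEqv (ends : E → Sym2 V) : List V → List V → Prop :=
  Relation.ReflTransGen (SwapStep ends)

/-- One transposition of a pair of consecutive entries of an infinite sequence which are
not neighbors in the graph. -/
def InfSwapStep (ends : E → Sym2 V) (s s' : ℕ → V) : Prop :=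
  ∃ i, ¬ Adj ends (s i) (s (i + 1)) ∧
    s' = fun j => if j = i then s (i + 1) else if j = i + 1 then s i else s j

/-- An infinite sequence `s` is equivalent to `w` if, by a sequence of such
transpositions, one can transform `s` so that arbitrarily long initial segments of it
match those of `w`. -/
def InfEqv (ends : E → Sym2 V) (s w : ℕ → V) : Prop :=
  ∀ n : ℕ, ∃ t : ℕ → V,
    Relation.ReflTransGen (InfSwapStep ends) s t ∧ ∀ i < n, t i = w i

/-- Equivalence of possibly infinite vertex sequences. -/
def SeqEqv (ends : E → Sym2 V) : PopSeq V → PopSeq V → Prop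
  | .fin l, .fin l' => ListEqv ends l l'
  | .inf s, .inf s' => InfEqv ends s s'
  | _, _ => False

/-- A maximal popping sequence for `ω`: either a finite legal popping sequence that
cannot be extended, or an infinite legal popping sequence. -/
def IsMaximalSeq (ends : E → Sym2 V) (ω : PopSpace ends) : PopSeq V → Prop
  | .fin l => IsMaximal ends ω l
  | .inf s => IsLegalInf ends ω s

/-- The length (total number of pops, possibly `⊤`) of a popping sequence. -/
def seqLength : PopSeq V → ℕ∞
  | .fin l => (l.length : ℕ∞)
  | .inf _ => ⊤

open scoped Classical in
/-- The number of occurrences of the vertex `v` in a possibly infinite sequence; together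
with `seqLength`, this records the multiset of popped vertices. -/
noncomputable def seqCount : PopSeq V → V → ℕ∞
  | .fin l, v => (l.count v : ℕ∞)
  | .inf s, v => if h : {i | s i = v}.Finite then (h.toFinset.card : ℕ∞) else ⊤

section Proof3
set_option linter.unusedSectionVars false
set_option linter.unusedVariables false

variable {ends : E → Sym2 V}

/-- The tail of an oriented edge is an endpoint. -/
lemma fst_mem (o : Orientation ends) (e : E) : ((o e : V × V)).1 ∈ ends e := by
  rcases o e with ⟨⟨a, b⟩, h⟩
  simp [h]

lemma adj_symm {a b : V} (h : Adj ends a b) : Adj ends b a := by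
  obtain ⟨e, he⟩ := h
  exact ⟨e, by rwa [Sym2.eq_swap] at he⟩

lemma not_adj_of_sinks {o : Orientation ends} {a b : V}
    (ha : IsSink ends o a) (hb : IsSink ends o b) : ¬ Adj ends a b := by
  rintro ⟨e, he⟩
  have h1 := fst_mem o e
  set x := ((o e : V × V)).1 with hx
  rw [he, Sym2.mem_iff] at h1
  rcases h1 with h1 | h1
  · exact ha e (hx ▸ h1)
  · exact hb e (hx ▸ h1)

lemma sink_congr {o o' : Orientation ends} {v : V}
    (h : ∀ e, v ∈ ends e → o e = o' e) (hs : IsSink ends o v) : IsSink ends o' v := by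
  intro e hc
  by_cases hv : v ∈ ends e
  · exact hs e (by rw [h e hv]; exact hc)
  · exact hv (hc ▸ fst_mem o' e)

/-- abbreviation for edge pop counts -/
def cnt (ends : E → Sym2 V) (l : List V) (e : E) : ℕ :=
  l.countP (fun v => decide (v ∈ ends e))

lemma orientAfter_eq (ω : PopSpace ends) (l : List V) (e : E) :
    orientAfter ends ω l e = ω e (cnt ends l e) := rfl

lemma cnt_append (l m : List V) (e : E) :
    cnt ends (l ++ m) e = cnt ends l e + cnt ends m e := List.countP_append

lemma cnt_perm {l m : List V} (h : l.Perm m) (e : E) : cnt ends l e = cnt ends m e :=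
  h.countP_eq _

lemma cnt_single (a : V) (e : E) :
    cnt ends ([a]) e = if a ∈ ends e then 1 else 0 := by
  simp [cnt, List.countP_cons]

lemma cnt_single_of_not_mem {a : V} {e : E} (h : a ∉ ends e) : cnt ends ([a]) e = 0 := by
  rw [cnt_single]; simp [h]

lemma orientAfter_perm (ω : PopSpace ends) {l m : List V} (h : l.Perm m) :
    orientAfter ends ω l = orientAfter ends ω m := by
  funext e
  rw [orientAfter_eq, orientAfter_eq, cnt_perm h]

lemma orientAfter_nil (ω : PopSpace ends) :
    orientAfter ends ω ([]) = initOrient ends ω := rfl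

/-- The stacks with the pops of `l` performed. -/
def shifted (ends : E → Sym2 V) (ω : PopSpace ends) (l : List V) : PopSpace ends :=
  fun e k => ω e (k + cnt ends l e)

lemma orientAfter_shifted (ω : PopSpace ends) (l m : List V) :
    orientAfter ends (shifted ends ω l) m = orientAfter ends ω (l ++ m) := by
  funext e
  rw [orientAfter_eq, orientAfter_eq, cnt_append]
  show ω e (cnt ends m e + cnt ends l e) = _
  rw [Nat.add_comm]

lemma initOrient_shifted (ω : PopSpace ends) (l : List V) :
    initOrient ends (shifted ends ω l) = orientAfter ends ω l := by
  funext e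
  show ω e (0 + cnt ends l e) = ω e (cnt ends l e)
  rw [Nat.zero_add]

lemma shifted_nil (ω : PopSpace ends) : shifted ends ω ([]) = ω := rfl

lemma shifted_shifted (ω : PopSpace ends) (l m : List V) :
    shifted ends (shifted ends ω l) m = shifted ends ω (l ++ m) := by
  funext e k
  show ω e (k + cnt ends m e + cnt ends l e) = ω e (k + cnt ends (l ++ m) e)
  rw [cnt_append]; ring_nf

lemma shifted_cons (ω : PopSpace ends) (a : V) (l : List V) :
    shifted ends ω (a :: l) = shifted ends (shifted ends ω ([a])) l := by
  rw [shifted_shifted]; rfl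

lemma shifted_perm (ω : PopSpace ends) {l m : List V} (h : l.Perm m) :
    shifted ends ω l = shifted ends ω m := by
  funext e k; show ω e (k + cnt ends l e) = ω e (k + cnt ends m e); rw [cnt_perm h]


lemma isLegal_nil (ω : PopSpace ends) : IsLegal ends ω ([]) := by
  intro i h; simp at h

lemma isLegal_cons {ω : PopSpace ends} {a : V} {l : List V} :
    IsLegal ends ω (a :: l) ↔
      IsSink ends (initOrient ends ω) a ∧ IsLegal ends (shifted ends ω ([a])) l := by
  constructor
  · intro h
    refine ⟨?_, ?_⟩
    · have := h 0 (by simp)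
      simpa [orientAfter_nil] using this
    · intro i hi
      have := h (i + 1) (by simpa using Nat.succ_lt_succ hi)
      rw [show (a :: l).take (i+1) = a :: l.take i from rfl] at this
      rw [show ((a :: l).get ⟨i+1, _⟩) = l.get ⟨i, hi⟩ from rfl] at this
      rwa [show a :: l.take i = [a] ++ l.take i from rfl, ← orientAfter_shifted] at this
  · rintro ⟨h0, h⟩ i hi
    match i with
    | 0 => simpa [orientAfter_nil] using h0
    | (i + 1) =>
      have hi' : i < l.length := by simpa using Nat.lt_of_succ_lt_succ hi
      have := h i hi'
      rw [orientAfter_shifted] at this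
      rw [show (a :: l).take (i+1) = a :: l.take i from rfl]
      rw [show ((a :: l).get ⟨i+1, hi⟩) = l.get ⟨i, hi'⟩ from rfl]
      exact this

lemma isLegal_append {ω : PopSpace ends} {l m : List V} :
    IsLegal ends ω (l ++ m) ↔
      IsLegal ends ω l ∧ IsLegal ends (shifted ends ω l) m := by
  induction l generalizing ω with
  | nil => simp [shifted_nil, isLegal_nil]
  | cons a l ih =>
    rw [List.cons_append, isLegal_cons, isLegal_cons, ih, shifted_cons ω a l, and_assoc]

lemma isLegal_append_singleton {ω : PopSpace ends} {l : List V} {v : V} :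
    IsLegal ends ω (l ++ [v]) ↔
      IsLegal ends ω l ∧ IsSink ends (orientAfter ends ω l) v := by
  rw [isLegal_append, isLegal_cons]
  simp [isLegal_nil, initOrient_shifted]

lemma isLegal_of_append_left {ω : PopSpace ends} {l m : List V}
    (h : IsLegal ends ω (l ++ m)) : IsLegal ends ω l :=
  (isLegal_append.1 h).1

lemma isLegal_take {ω : PopSpace ends} {l : List V} (h : IsLegal ends ω l) (n : ℕ) :
    IsLegal ends ω (l.take n) :=
  isLegal_of_append_left (l.take_append_drop n ▸ h)

lemma isMaximal_iff {ω : PopSpace ends} {l : List V} :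
    IsMaximal ends ω l ↔ IsLegal ends ω l ∧ IsSFO ends (orientAfter ends ω l) := by
  unfold IsMaximal
  constructor
  · rintro ⟨hleg, hmax⟩
    refine ⟨hleg, fun v hv => hmax v (isLegal_append_singleton.2 ⟨hleg, hv⟩)⟩
  · rintro ⟨hleg, hsfo⟩
    exact ⟨hleg, fun v hv => hsfo v (isLegal_append_singleton.1 hv).2⟩

lemma sym2_eq_of_mem {z : Sym2 V} {a b : V} (hne : a ≠ b) (ha : a ∈ z) (hb : b ∈ z) :
    z = s(a, b) :=
  (Sym2.mem_and_mem_iff hne).1 ⟨ha, hb⟩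

lemma not_mem_of_not_adj {a b : V} {e : E} (hne : a ≠ b) (hadj : ¬ Adj ends a b)
    (hb : b ∈ ends e) : a ∉ ends e := by
  intro ha
  exact hadj ⟨e, sym2_eq_of_mem hne ha hb⟩

/-- Popping a non-adjacent vertex `a` does not change the orientation on edges at `b`. -/
lemma sink_after_pop_nonadj {ω : PopSpace ends} {l : List V} {a b : V}
    (hne : a ≠ b) (hadj : ¬ Adj ends a b)
    (hb : IsSink ends (orientAfter ends ω l) b) :
    IsSink ends (orientAfter ends ω (l ++ [a])) b := by
  refine sink_congr (fun e he => ?_) hb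
  rw [orientAfter_eq, orientAfter_eq, cnt_append, cnt_single_of_not_mem (not_mem_of_not_adj hne hadj he), Nat.add_zero]

lemma sink_after_pop_nonadj' {ω : PopSpace ends} {l : List V} {a b : V}
    (hne : a ≠ b) (hadj : ¬ Adj ends a b)
    (hb : IsSink ends (orientAfter ends ω (l ++ [a])) b) :
    IsSink ends (orientAfter ends ω l) b := by
  refine sink_congr (fun e he => ?_) hb
  rw [orientAfter_eq, orientAfter_eq, cnt_append, cnt_single_of_not_mem (not_mem_of_not_adj hne hadj he), Nat.add_zero]

/-- Popping any other sink keeps `v` a sink. -/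
lemma sink_pop_other {ω : PopSpace ends} {l : List V} {v w : V}
    (hv : IsSink ends (orientAfter ends ω l) v)
    (hw : IsSink ends (orientAfter ends ω l) w) (hne : w ≠ v) :
    IsSink ends (orientAfter ends ω (l ++ [w])) v :=
  sink_after_pop_nonadj hne (not_adj_of_sinks hw hv) hv

lemma swapStep_perm {l l' : List V} (h : SwapStep ends l l') : l.Perm l' := by
  obtain ⟨l₁, a, b, l₂, _, rfl, rfl⟩ := h
  exact List.Perm.append_left l₁ (List.Perm.swap b a l₂)

lemma swapStep_symm {l l' : List V} (h : SwapStep ends l l') : SwapStep ends l' l := by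
  obtain ⟨l₁, a, b, l₂, hadj, rfl, rfl⟩ := h
  exact ⟨l₁, b, a, l₂, fun hc => hadj (adj_symm hc), rfl, rfl⟩

lemma swap_legal_aux {a b : V} (hadj : ¬ Adj ends a b) (l₂ : List V) :
    ∀ (l₁ : List V) (ω : PopSpace ends), IsLegal ends ω (l₁ ++ a :: b :: l₂) →
      IsLegal ends ω (l₁ ++ b :: a :: l₂) := by
  intro l₁
  induction l₁ with
  | cons c l₁ ih =>
    intro ω h
    rw [List.cons_append, isLegal_cons] at h ⊢
    exact ⟨h.1, ih _ h.2⟩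
  | nil =>
    intro ω h
    rcases eq_or_ne a b with rfl | hne
    · exact h
    simp only [List.nil_append] at h ⊢
    rw [isLegal_cons, isLegal_cons] at h
    obtain ⟨ha, hb, hl⟩ := h
    rw [initOrient_shifted] at hb
    have hb0 : IsSink ends (initOrient ends ω) b := by
      rw [← orientAfter_nil]
      exact sink_after_pop_nonadj' hne hadj (by simpa using hb)
    have ha1 : IsSink ends (initOrient ends (shifted ends ω ([b]))) a := by
      rw [initOrient_shifted]
      have := sink_after_pop_nonadj (Ne.symm hne) (fun hc => hadj (adj_symm hc))
        (l := ([] : List V)) (by rw [orientAfter_nil]; exact ha)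
      simpa using this
    rw [isLegal_cons, isLegal_cons]
    refine ⟨hb0, ha1, ?_⟩
    rw [shifted_shifted] at hl
    simp only [List.singleton_append] at hl
    rw [shifted_perm ω (List.Perm.swap b a ([] : List V))] at hl
    rw [shifted_shifted]
    simpa using hl

lemma swapStep_legal {ω : PopSpace ends} {l l' : List V}
    (h : SwapStep ends l l') (hl : IsLegal ends ω l) : IsLegal ends ω l' := by
  obtain ⟨l₁, a, b, l₂, hadj, rfl, rfl⟩ := h
  exact swap_legal_aux hadj l₂ l₁ ω hl

lemma listEqv_perm {l l' : List V} (h : ListEqv ends l l') : l.Perm l' := by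
  induction h with
  | refl => exact List.Perm.refl _
  | tail _ hstep ih => exact ih.trans (swapStep_perm hstep)

lemma listEqv_legal {ω : PopSpace ends} {l l' : List V}
    (h : ListEqv ends l l') (hl : IsLegal ends ω l) : IsLegal ends ω l' := by
  induction h with
  | refl => exact hl
  | tail _ hstep ih => exact swapStep_legal hstep ih

lemma listEqv_symm {l l' : List V} (h : ListEqv ends l l') : ListEqv ends l' l := by
  induction h with
  | refl => exact Relation.ReflTransGen.refl
  | tail _ hstep ih => exact Relation.ReflTransGen.head (swapStep_symm hstep) ih

lemma listEqv_maximal {ω : PopSpace ends} {l l' : List V}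
    (h : ListEqv ends l l') (hl : IsMaximal ends ω l) : IsMaximal ends ω l' := by
  rw [isMaximal_iff] at hl ⊢
  rw [← orientAfter_perm ω (listEqv_perm h)]
  exact ⟨listEqv_legal h hl.1, hl.2⟩

lemma listEqv_cons {l l' : List V} (a : V) (h : ListEqv ends l l') :
    ListEqv ends (a :: l) (a :: l') := by
  induction h with
  | refl => exact Relation.ReflTransGen.refl
  | tail _ hstep ih =>
    refine ih.tail ?_
    obtain ⟨l₁, x, y, l₂, hadj, rfl, rfl⟩ := hstep
    exact ⟨a :: l₁, x, y, l₂, hadj, rfl, rfl⟩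

/-- Persistence: a sink that is never popped stays a sink, and nothing adjacent
to it is ever popped. -/
lemma persist_start {v : V} :
    ∀ (l : List V) (ω : PopSpace ends), IsLegal ends ω l →
      IsSink ends (initOrient ends ω) v → v ∉ l →
      IsSink ends (orientAfter ends ω l) v ∧ ∀ w ∈ l, ¬ Adj ends v w := by
  intro l
  induction l with
  | nil => intro ω _ hv _; exact ⟨by rwa [orientAfter_nil], by simp⟩
  | cons a l ih =>
    intro ω hleg hv hnm
    rw [isLegal_cons] at hleg
    have hva : v ≠ a := fun hc => hnm (hc ▸ List.mem_cons_self)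
    have hadj : ¬ Adj ends v a := not_adj_of_sinks hv hleg.1
    have h0 : IsSink ends (orientAfter ends ω (([] : List V) ++ [a])) v :=
      sink_pop_other (ω := ω) (l := []) (v := v) (w := a)
        (by rwa [orientAfter_nil]) (by rw [orientAfter_nil]; exact hleg.1) (Ne.symm hva)
    rw [List.nil_append] at h0
    have hv1 : IsSink ends (initOrient ends (shifted ends ω ([a]))) v := by
      rwa [initOrient_shifted]
    obtain ⟨h1, h2⟩ := ih (shifted ends ω ([a])) hleg.2 hv1
      (fun hc => hnm (List.mem_cons_of_mem a hc))
    rw [orientAfter_shifted] at h1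
    refine ⟨h1, fun w hw => ?_⟩
    rcases List.mem_cons.1 hw with rfl | hw
    · exact hadj
    · exact h2 w hw

lemma mem_split_first {a : V} {l : List V} (h : a ∈ l) :
    ∃ s t, l = s ++ a :: t ∧ a ∉ s := by
  induction l with
  | nil => simp at h
  | cons b l ih =>
    rcases eq_or_ne a b with rfl | hne
    · exact ⟨[], l, rfl, List.not_mem_nil⟩
    · obtain ⟨s, t, rfl, hns⟩ := ih (List.mem_of_ne_of_mem hne h)
      exact ⟨b :: s, t, rfl, by simp [List.mem_cons, hns, hne]⟩

/-- Bubbling an element to the front past non-neighbours. -/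
lemma bubble_front {a : V} :
    ∀ (l₁ l₂ : List V), (∀ w ∈ l₁, ¬ Adj ends a w) →
      ListEqv ends (l₁ ++ a :: l₂) (a :: (l₁ ++ l₂)) := by
  intro l₁
  induction l₁ with
  | nil => intro l₂ _; exact Relation.ReflTransGen.refl
  | cons c l₁ ih =>
    intro l₂ hadj
    have step1 : ListEqv ends (c :: (l₁ ++ a :: l₂)) (c :: a :: (l₁ ++ l₂)) :=
      listEqv_cons c (ih l₂ (fun w hw => hadj w (List.mem_cons_of_mem c hw)))
    refine Relation.ReflTransGen.tail step1 ?_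
    exact ⟨[], c, a, l₁ ++ l₂, fun hc => hadj c List.mem_cons_self (adj_symm hc), rfl, rfl⟩

/-- Lemma C: a finite maximal sequence absorbs every legal sequence. -/
lemma maximal_absorbs :
    ∀ (m : List V) (ω : PopSpace ends) (l : List V), IsMaximal ends ω l →
      IsLegal ends ω m → ∃ r, ListEqv ends l (m ++ r) := by
  intro m
  induction m with
  | nil => intro ω l hl _; exact ⟨l, Relation.ReflTransGen.refl⟩
  | cons a m ih =>
    intro ω l hl hm
    rw [isLegal_cons] at hm
    have hmax := isMaximal_iff.1 hl
    -- a must occur in l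
    have hal : a ∈ l := by
      by_contra hna
      obtain ⟨hsink, -⟩ := persist_start l ω hmax.1 hm.1 hna
      exact hmax.2 a hsink
    obtain ⟨l₁, l₂, rfl, hnl₁⟩ := mem_split_first hal
    have hleg₁ : IsLegal ends ω l₁ := isLegal_of_append_left hmax.1
    obtain ⟨-, hadj⟩ := persist_start l₁ ω hleg₁ hm.1 hnl₁
    have hbub : ListEqv ends (l₁ ++ a :: l₂) (a :: (l₁ ++ l₂)) := bubble_front l₁ l₂ hadj
    have hmax' : IsMaximal ends ω (a :: (l₁ ++ l₂)) := listEqv_maximal hbub hl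
    have hmax'' : IsMaximal ends (shifted ends ω ([a])) (l₁ ++ l₂) := by
      rw [isMaximal_iff] at hmax' ⊢
      rw [isLegal_cons] at hmax'
      refine ⟨hmax'.1.2, ?_⟩
      rw [orientAfter_shifted]
      exact hmax'.2
    obtain ⟨r, hr⟩ := ih (shifted ends ω ([a])) (l₁ ++ l₂) hmax'' hm.2
    exact ⟨r, Relation.ReflTransGen.trans hbub (listEqv_cons a hr)⟩

/-- The list of the first `n` entries of an infinite sequence. -/
def prefixSeq (s : ℕ → V) (n : ℕ) : List V := (List.range n).map s

lemma prefixSeq_length (s : ℕ → V) (n : ℕ) : (prefixSeq s n).length = n := by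
  simp [prefixSeq]

lemma prefixSeq_succ (s : ℕ → V) (n : ℕ) :
    prefixSeq s (n + 1) = prefixSeq s n ++ [s n] := by
  simp [prefixSeq, List.range_succ]

lemma prefixSeq_take (s : ℕ → V) {n N : ℕ} (h : n ≤ N) :
    (prefixSeq s N).take n = prefixSeq s n := by
  simp [prefixSeq, ← List.map_take, List.take_range, Nat.min_eq_left h]

lemma prefixSeq_get (s : ℕ → V) {n i : ℕ} (h : i < (prefixSeq s n).length) :
    (prefixSeq s n).get ⟨i, h⟩ = s i := by
  simp [prefixSeq]

lemma prefixSeq_congr {s t : ℕ → V} {n : ℕ} (h : ∀ i < n, s i = t i) :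
    prefixSeq s n = prefixSeq t n := by
  unfold prefixSeq
  apply List.map_congr_left
  intro i hi
  exact h i (List.mem_range.1 hi)

lemma prefixSeq_eq_iff {s t : ℕ → V} {n : ℕ} :
    prefixSeq s n = prefixSeq t n ↔ ∀ i < n, s i = t i := by
  constructor
  · intro h i hi
    have h1 : i < (prefixSeq s n).length := by rwa [prefixSeq_length]
    have h2 : i < (prefixSeq t n).length := by rwa [prefixSeq_length]
    rw [← prefixSeq_get s h1, ← prefixSeq_get t h2, List.get_eq_getElem,
      List.get_eq_getElem]
    simp only [h]
  · exact prefixSeq_congr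

lemma isLegalInf_iff {ω : PopSpace ends} {s : ℕ → V} :
    IsLegalInf ends ω s ↔ ∀ n, IsLegal ends ω (prefixSeq s n) := by
  constructor
  · intro h n i hi
    have hi' : i < n := by rwa [prefixSeq_length] at hi
    rw [prefixSeq_take s (le_of_lt hi'), prefixSeq_get]
    exact h i
  · intro h i
    have := h (i + 1) i (by rw [prefixSeq_length]; omega)
    rwa [prefixSeq_take s (Nat.le_succ i), prefixSeq_get] at this

lemma isLegalInf_of_prefixes {ω : PopSpace ends} {s : ℕ → V}
    (h : ∀ n, ∃ N, n ≤ N ∧ IsLegal ends ω (prefixSeq s N)) : IsLegalInf ends ω s := by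
  rw [isLegalInf_iff]
  intro n
  obtain ⟨N, hn, hN⟩ := h n
  have := isLegal_take hN n
  rwa [prefixSeq_take s hn] at this

/-- If a finite maximal sequence exists, there is no infinite legal sequence. -/
lemma not_legalInf_of_maximal {ω : PopSpace ends} {l : List V} {s : ℕ → V}
    (hl : IsMaximal ends ω l) (hs : IsLegalInf ends ω s) : False := by
  obtain ⟨r, hr⟩ := maximal_absorbs (prefixSeq s (l.length + 1)) ω l hl
    (isLegalInf_iff.1 hs (l.length + 1))
  have := (listEqv_perm hr).length_eq
  rw [List.length_append, prefixSeq_length] at this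
  omega

/-- Any two finite maximal sequences are equivalent. -/
lemma maximal_listEqv {ω : PopSpace ends} {l q : List V}
    (hl : IsMaximal ends ω l) (hq : IsMaximal ends ω q) : ListEqv ends l q := by
  obtain ⟨r, hr⟩ := maximal_absorbs q ω l hl (isMaximal_iff.1 hq).1
  cases r with
  | nil => simpa using hr
  | cons v r' =>
    exfalso
    have hqr : IsLegal ends ω (q ++ v :: r') := listEqv_legal hr (isMaximal_iff.1 hl).1
    rw [isLegal_append, isLegal_cons, initOrient_shifted] at hqr
    exact (isMaximal_iff.1 hq).2 v hqr.2.1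

/-- Prepend an element to an infinite sequence. -/
def consSeq (a : V) (s : ℕ → V) : ℕ → V
  | 0 => a
  | (k + 1) => s k

/-- Delete the `j`-th entry of an infinite sequence. -/
def delete (j : ℕ) (s : ℕ → V) : ℕ → V := fun k => if k < j then s k else s (k + 1)

lemma prefixSeq_consSeq (a : V) (s : ℕ → V) (n : ℕ) :
    prefixSeq (consSeq a s) (n + 1) = a :: prefixSeq s n := by
  induction n with
  | zero => rfl
  | succ n ih =>
    rw [prefixSeq_succ, ih, prefixSeq_succ]
    rfl

lemma isLegalInf_cons {ω : PopSpace ends} {a : V} {s : ℕ → V} :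
    IsLegalInf ends ω (consSeq a s) ↔
      IsSink ends (initOrient ends ω) a ∧ IsLegalInf ends (shifted ends ω ([a])) s := by
  rw [isLegalInf_iff, isLegalInf_iff]
  constructor
  · intro h
    constructor
    · have := h 1
      rw [show prefixSeq (consSeq a s) 1 = a :: prefixSeq s 0 from prefixSeq_consSeq a s 0,
        isLegal_cons] at this
      exact this.1
    · intro n
      have := h (n + 1)
      rw [prefixSeq_consSeq, isLegal_cons] at this
      exact this.2
  · rintro ⟨h0, h⟩ n
    cases n with
    | zero => exact isLegal_nil ω
    | succ n =>
      rw [prefixSeq_consSeq, isLegal_cons]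
      exact ⟨h0, h n⟩

lemma prefixSeq_add (u : ℕ → V) (a b : ℕ) :
    prefixSeq u (a + b) = prefixSeq u a ++ (List.range b).map (fun k => u (a + k)) := by
  unfold prefixSeq
  rw [List.range_add, List.map_append, List.map_map]
  rfl

lemma prefixSeq_decomp (u : ℕ → V) (i M : ℕ) :
    prefixSeq u (i + 2 + M) =
      prefixSeq u i ++ u i :: u (i + 1) :: (List.range M).map (fun k => u (i + 2 + k)) := by
  rw [prefixSeq_add, show i + 2 = i + 1 + 1 from rfl, prefixSeq_succ, prefixSeq_succ]
  simp [List.append_assoc]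

/-- The two prefixes related by an infinite swap step. -/
lemma infSwapStep_prefix_swap {s s' : ℕ → V} (h : InfSwapStep ends s s') :
    ∃ i, (∀ n, n ≤ i → prefixSeq s' n = prefixSeq s n) ∧
      (∀ M, SwapStep ends (prefixSeq s (i + 2 + M)) (prefixSeq s' (i + 2 + M))) ∧
      (∀ j, j ≠ i → j ≠ i + 1 → s' j = s j) ∧ s' i = s (i + 1) ∧ s' (i + 1) = s i := by
  obtain ⟨i, hadj, rfl⟩ := h
  refine ⟨i, ?_, ?_, ?_, ?_, ?_⟩
  · intro n hn
    exact prefixSeq_congr (fun j hj => by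
      have h1 : j ≠ i := by omega
      have h2 : j ≠ i + 1 := by omega
      simp [h1, h2])
  · intro M
    rw [prefixSeq_decomp, prefixSeq_decomp]
    have h0 : prefixSeq (fun j => if j = i then s (i+1) else if j = i+1 then s i else s j) i
        = prefixSeq s i :=
      prefixSeq_congr (fun j hj => by
        have h1 : j ≠ i := by omega
        have h2 : j ≠ i + 1 := by omega
        simp [h1, h2])
    have h1 : ∀ k : ℕ, i + 2 + k ≠ i := fun k => by omega
    have h2 : ∀ k : ℕ, i + 2 + k ≠ i + 1 := fun k => by omega
    refine ⟨prefixSeq s i, s i, s (i + 1),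
      (List.range M).map (fun k => s (i + 2 + k)), hadj, rfl, ?_⟩
    rw [h0]
    simp [h1, h2]
  · intro j h1 h2; simp [h1, h2]
  · simp
  · simp

lemma infSwapStep_legal {ω : PopSpace ends} {s s' : ℕ → V}
    (h : InfSwapStep ends s s') (hs : IsLegalInf ends ω s) : IsLegalInf ends ω s' := by
  obtain ⟨i, -, hswap, -, -, -⟩ := infSwapStep_prefix_swap h
  apply isLegalInf_of_prefixes
  intro n
  refine ⟨i + 2 + n, by omega, ?_⟩
  exact swapStep_legal (hswap n) (isLegalInf_iff.1 hs (i + 2 + n))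

/-- Fairness: every vertex that is a sink at some time is popped at some later time. -/
def Fair (ends : E → Sym2 V) (ω : PopSpace ends) (s : ℕ → V) : Prop :=
  ∀ k v, IsSink ends (orientAfter ends ω (prefixSeq s k)) v → ∃ j, k ≤ j ∧ s j = v

lemma infSwapStep_fair {ω : PopSpace ends} {s s' : ℕ → V}
    (h : InfSwapStep ends s s') (hs : IsLegalInf ends ω s) (hf : Fair ends ω s) :
    Fair ends ω s' := by
  have hs' : IsLegalInf ends ω s' := infSwapStep_legal h hs
  obtain ⟨i, hpre, hswap, hoth, hi1, hi2⟩ := infSwapStep_prefix_swap h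
  have hperm : ∀ M, orientAfter ends ω (prefixSeq s' (i + 2 + M)) =
      orientAfter ends ω (prefixSeq s (i + 2 + M)) :=
    fun M => (orientAfter_perm ω (swapStep_perm (hswap M))).symm
  intro k v hv
  rcases Nat.lt_or_ge k (i + 1) with hk | hk
  · -- k ≤ i
    rw [hpre k (by omega)] at hv
    obtain ⟨j, hj1, hj2⟩ := hf k v hv
    rcases eq_or_ne j i with heq | hji
    · refine ⟨i + 1, by omega, ?_⟩
      rw [hi2, ← heq]; exact hj2
    rcases eq_or_ne j (i + 1) with heq1 | hji1
    · refine ⟨i, by omega, ?_⟩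
      rw [hi1, ← heq1]; exact hj2
    · exact ⟨j, hj1, by rw [hoth j hji hji1]; exact hj2⟩
  rcases Nat.lt_or_ge k (i + 2) with hk2 | hk2
  · -- k = i + 1
    have hk' : k = i + 1 := by omega
    subst hk'
    rcases eq_or_ne v (s i) with rfl | hvne
    · exact ⟨i + 1, le_refl _, hi2⟩
    · -- s i is popped next in s'; v stays a sink
      have hsink : IsSink ends (orientAfter ends ω (prefixSeq s' (i + 1))) (s i) := by
        have := hs' (i + 1)
        rwa [hi2] at this
      have hv2 : IsSink ends (orientAfter ends ω (prefixSeq s' (i + 1) ++ [s i])) v :=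
        sink_pop_other hv hsink (Ne.symm hvne)
      have hstep2 : prefixSeq s' (i + 1) ++ [s i] = prefixSeq s' (i + 2) := by
        have h3 := prefixSeq_succ s' (i + 1)
        rw [hi2] at h3
        exact h3.symm
      rw [hstep2] at hv2
      rw [show i + 2 = i + 2 + 0 from rfl, hperm 0] at hv2
      obtain ⟨j, hj1, hj2⟩ := hf (i + 2 + 0) v hv2
      refine ⟨j, by omega, ?_⟩
      rw [hoth j (by omega) (by omega), hj2]
  · -- k ≥ i + 2
    obtain ⟨M, rfl⟩ : ∃ M, k = i + 2 + M := ⟨k - (i + 2), by omega⟩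
    rw [hperm M] at hv
    obtain ⟨j, hj1, hj2⟩ := hf _ v hv
    refine ⟨j, hj1, ?_⟩
    rw [hoth j (by omega) (by omega), hj2]

lemma infChain_legal {ω : PopSpace ends} {s t : ℕ → V}
    (h : Relation.ReflTransGen (InfSwapStep ends) s t) (hs : IsLegalInf ends ω s) :
    IsLegalInf ends ω t := by
  induction h with
  | refl => exact hs
  | tail _ hstep ih => exact infSwapStep_legal hstep ih

lemma infChain_legal_fair {ω : PopSpace ends} {s t : ℕ → V}
    (h : Relation.ReflTransGen (InfSwapStep ends) s t)
    (hs : IsLegalInf ends ω s) (hf : Fair ends ω s) :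
    IsLegalInf ends ω t ∧ Fair ends ω t := by
  induction h with
  | refl => exact ⟨hs, hf⟩
  | tail _ hstep ih => exact ⟨infSwapStep_legal hstep ih.1, infSwapStep_fair hstep ih.1 ih.2⟩

lemma infSwapStep_cons {s t : ℕ → V} (a : V) (h : InfSwapStep ends s t) :
    InfSwapStep ends (consSeq a s) (consSeq a t) := by
  obtain ⟨i, hadj, rfl⟩ := h
  refine ⟨i + 1, hadj, ?_⟩
  funext j
  match j with
  | 0 => simp [consSeq]
  | (j + 1) =>
    show (if j = i then s (i+1) else if j = i+1 then s i else s j) = _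
    rcases eq_or_ne j i with rfl | h1
    · simp [consSeq]
    rcases eq_or_ne j (i+1) with rfl | h2
    · simp [consSeq]
    · have g1 : j + 1 ≠ i + 1 := by omega
      have g2 : j + 1 ≠ i + 1 + 1 := by omega
      simp [h1, h2, g1, g2, consSeq]

lemma infChain_cons {s t : ℕ → V} (a : V)
    (h : Relation.ReflTransGen (InfSwapStep ends) s t) :
    Relation.ReflTransGen (InfSwapStep ends) (consSeq a s) (consSeq a t) := by
  induction h with
  | refl => exact Relation.ReflTransGen.refl
  | tail _ hstep ih => exact ih.tail (infSwapStep_cons a hstep)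

lemma bubble_inf :
    ∀ (j : ℕ) (s : ℕ → V), (∀ i < j, ¬ Adj ends (s j) (s i)) →
      Relation.ReflTransGen (InfSwapStep ends) s (consSeq (s j) (delete j s)) := by
  intro j
  induction j with
  | zero =>
    intro s _
    have : consSeq (s 0) (delete 0 s) = s := by
      funext k
      match k with
      | 0 => rfl
      | (k + 1) => simp [consSeq, delete]
    rw [this]
  | succ j ih =>
    intro s hadj
    set s₁ : ℕ → V := fun k => if k = j then s (j+1) else if k = j+1 then s j else s k with hs₁
    have hstep : InfSwapStep ends s s₁ := by
      refine ⟨j, ?_, rfl⟩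
      intro hc
      exact hadj j (Nat.lt_succ_self j) (adj_symm hc)
    have hs₁j : s₁ j = s (j + 1) := by simp [hs₁]
    have key : ∀ i < j, ¬ Adj ends (s₁ j) (s₁ i) := by
      intro i hi
      have h1 : i ≠ j := by omega
      have h2 : i ≠ j + 1 := by omega
      rw [hs₁j]
      simp only [hs₁, h1, h2, if_false]
      exact hadj i (by omega)
    have hrest := ih s₁ key
    have hs₁v : ∀ n, n ≠ j → n ≠ j + 1 → s₁ n = s n := by
      intro n h1 h2; simp [hs₁, h1, h2]
    have hs₁b : s₁ (j + 1) = s j := by simp [hs₁]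
    have heq : consSeq (s₁ j) (delete j s₁) = consSeq (s (j+1)) (delete (j+1) s) := by
      rw [hs₁j]
      funext k
      match k with
      | 0 => rfl
      | (k + 1) =>
        show (if k < j then s₁ k else s₁ (k + 1)) = (if k < j + 1 then s k else s (k + 1))
        by_cases hk : k < j
        · rw [if_pos hk, if_pos (by omega), hs₁v k (by omega) (by omega)]
        · by_cases hk2 : k = j
          · subst hk2
            rw [if_neg (by omega), if_pos (by omega), hs₁b]
          · rw [if_neg hk, if_neg (by omega), hs₁v (k + 1) (by omega) (by omega)]
    rw [heq] at hrest
    exact Relation.ReflTransGen.trans (Relation.ReflTransGen.single hstep) hrest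

lemma fair_tail {ω : PopSpace ends} {a : V} {s : ℕ → V}
    (hf : Fair ends ω (consSeq a s)) : Fair ends (shifted ends ω ([a])) s := by
  intro k v hv
  rw [orientAfter_shifted] at hv
  rw [show [a] ++ prefixSeq s k = prefixSeq (consSeq a s) (k + 1) from
    (prefixSeq_consSeq a s k).symm] at hv
  obtain ⟨j, hj1, hj2⟩ := hf (k + 1) v hv
  match j, hj1 with
  | (j + 1), hj1 =>
    exact ⟨j, by omega, hj2⟩

/-- Persistence along an infinite legal sequence. -/
lemma persist_seq_from {ω : PopSpace ends} {p : ℕ → V} {v : V} {k : ℕ}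
    (hp : IsLegalInf ends ω p)
    (hv : IsSink ends (orientAfter ends ω (prefixSeq p k)) v) :
    ∀ i, k ≤ i → (∀ j, k ≤ j → j < i → p j ≠ v) →
      IsSink ends (orientAfter ends ω (prefixSeq p i)) v := by
  intro i
  induction i with
  | zero => intro hki _; rw [Nat.le_zero.1 hki] at hv; exact hv
  | succ i ih =>
    intro hki hj
    rcases Nat.eq_or_lt_of_le hki with heq | hlt
    · rw [← heq]; exact hv
    have hki' : k ≤ i := by omega
    have hsink := ih hki' (fun j h1 h2 => hj j h1 (by omega))
    have hpi : IsSink ends (orientAfter ends ω (prefixSeq p i)) (p i) := hp i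
    have := sink_pop_other hsink hpi (hj i hki' (Nat.lt_succ_self i))
    rwa [← prefixSeq_succ] at this

/-- Lemma D: a fair infinite legal sequence absorbs every finite legal sequence. -/
lemma fair_absorbs :
    ∀ (m : List V) (ω : PopSpace ends) (p : ℕ → V),
      IsLegalInf ends ω p → Fair ends ω p → IsLegal ends ω m →
      ∃ t, Relation.ReflTransGen (InfSwapStep ends) p t ∧ prefixSeq t m.length = m := by
  intro m
  induction m with
  | nil => intro ω p _ _ _; exact ⟨p, Relation.ReflTransGen.refl, rfl⟩
  | cons a m ih =>
    intro ω p hleg hf hm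
    rw [isLegal_cons] at hm
    have hsink0 : IsSink ends (orientAfter ends ω (prefixSeq p 0)) a := hm.1
    have hex : ∃ j, p j = a := by
      obtain ⟨j, _, hj⟩ := hf 0 a hsink0
      exact ⟨j, hj⟩
    classical
    let j := Nat.find hex
    have hj : p j = a := Nat.find_spec hex
    have hjmin : ∀ i < j, p i ≠ a := fun i hi => Nat.find_min hex hi
    have hadj : ∀ i < j, ¬ Adj ends (p j) (p i) := by
      intro i hi
      have hsinka : IsSink ends (orientAfter ends ω (prefixSeq p i)) a :=
        persist_seq_from hleg hsink0 i (Nat.zero_le i) (fun j' _ h2 => hjmin j' (by omega))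
      have hsinkpi : IsSink ends (orientAfter ends ω (prefixSeq p i)) (p i) := hleg i
      rw [hj]
      exact not_adj_of_sinks hsinka hsinkpi
    have hbub := bubble_inf j p hadj
    rw [hj] at hbub
    obtain ⟨hleg', hf'⟩ := infChain_legal_fair hbub hleg hf
    rw [isLegalInf_cons] at hleg'
    have hftail := fair_tail hf'
    obtain ⟨t', hchain, hpre⟩ := ih (shifted ends ω ([a])) (delete j p) hleg'.2 hftail hm.2
    refine ⟨consSeq a t', Relation.ReflTransGen.trans hbub (infChain_cons a hchain), ?_⟩
    rw [show (a :: m).length = m.length + 1 from rfl, prefixSeq_consSeq, hpre]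

/-- One round of round-robin popping: go through the list `vs`, popping each vertex
that is a sink when its turn comes. -/
def extList (ends : E → Sym2 V) (ω : PopSpace ends) : List V → List V → List V
  | l, [] => l
  | l, v :: vs =>
      extList ends ω (if IsSink ends (orientAfter ends ω l) v then l ++ [v] else l) vs

lemma ext_prefix (ω : PopSpace ends) :
    ∀ (vs l : List V), l <+: extList ends ω l vs := by
  intro vs
  induction vs with
  | nil => intro l; exact List.prefix_refl l
  | cons v vs ih =>
    intro l
    show l <+: extList ends ω (if _ then _ else _) vs
    refine List.IsPrefix.trans ?_ (ih _)
    by_cases h : IsSink ends (orientAfter ends ω l) v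
    · rw [if_pos h]; exact List.prefix_append l ([v])
    · rw [if_neg h]

lemma ext_legal (ω : PopSpace ends) :
    ∀ (vs l : List V), IsLegal ends ω l → IsLegal ends ω (extList ends ω l vs) := by
  intro vs
  induction vs with
  | nil => intro l hl; exact hl
  | cons v vs ih =>
    intro l hl
    show IsLegal ends ω (extList ends ω (if _ then _ else _) vs)
    by_cases h : IsSink ends (orientAfter ends ω l) v
    · rw [if_pos h]; exact ih _ (isLegal_append_singleton.2 ⟨hl, h⟩)
    · rw [if_neg h]; exact ih _ hl

lemma ext_grows (ω : PopSpace ends) :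
    ∀ (vs l : List V), (∃ v ∈ vs, IsSink ends (orientAfter ends ω l) v) →
      l.length < (extList ends ω l vs).length := by
  intro vs
  induction vs with
  | nil => rintro l ⟨v, hv, -⟩; simp at hv
  | cons u vs ih =>
    rintro l ⟨v, hv, hs⟩
    show l.length < (extList ends ω (if _ then _ else _) vs).length
    by_cases h : IsSink ends (orientAfter ends ω l) u
    · rw [if_pos h]
      calc l.length < (l ++ [u]).length := by simp
        _ ≤ _ := (ext_prefix ω vs (l ++ [u])).length_le
    · rw [if_neg h]
      rcases List.mem_cons.1 hv with rfl | hv'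
      · exact absurd hs h
      · exact ih l ⟨v, hv', hs⟩

lemma prefix_getD {l l' : List V} (hp : l <+: l') {j : ℕ} (hj : j < l.length) (d : V) :
    l'.getD j d = l.getD j d := by
  obtain ⟨t, rfl⟩ := hp
  rw [List.getD_eq_getElem?_getD, List.getD_eq_getElem?_getD, List.getElem?_append_left hj]

lemma getD_concat_self (l : List V) (v d : V) :
    (l ++ [v]).getD l.length d = v := by
  rw [List.getD_eq_getElem?_getD]
  simp

lemma ext_captures (ω : PopSpace ends) :
    ∀ (vs l : List V) (v : V), v ∈ vs → IsLegal ends ω l →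
      IsSink ends (orientAfter ends ω l) v →
      ∃ j, l.length ≤ j ∧ j < (extList ends ω l vs).length ∧
        ∀ d, (extList ends ω l vs).getD j d = v := by
  intro vs
  induction vs with
  | nil => intro l v hv; simp at hv
  | cons u vs ih =>
    intro l v hv hl hs
    rw [show extList ends ω l (u :: vs) =
      extList ends ω (if IsSink ends (orientAfter ends ω l) u then l ++ [u] else l) vs from rfl]
    by_cases h : IsSink ends (orientAfter ends ω l) u
    · rw [if_pos h]
      rcases eq_or_ne u v with rfl | hne
      · refine ⟨l.length, le_refl _, ?_, ?_⟩
        · calc l.length < (l ++ [u]).length := by simp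
            _ ≤ _ := (ext_prefix ω vs (l ++ [u])).length_le
        · intro d
          rw [prefix_getD (ext_prefix ω vs (l ++ [u])) (by simp) d]
          exact getD_concat_self l u d
      · obtain ⟨j, hj1, hj2, hj3⟩ := ih (l ++ [u]) v
          (List.mem_of_ne_of_mem (Ne.symm hne) hv)
          (isLegal_append_singleton.2 ⟨hl, h⟩)
          (sink_pop_other hs h hne)
        exact ⟨j, by simp at hj1 ⊢; omega, hj2, hj3⟩
    · rw [if_neg h]
      rcases eq_or_ne u v with rfl | hne
      · exact absurd hs h
      · exact ih l v (List.mem_of_ne_of_mem (Ne.symm hne) hv) hl hs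

/-- The rounds of round-robin popping. -/
noncomputable def rounds (ends : E → Sym2 V) (ω : PopSpace ends) : ℕ → List V
  | 0 => []
  | (k + 1) => extList ends ω (rounds ends ω k) ((Finset.univ : Finset V).toList)

/-- If popping never terminates then there is a fair infinite legal popping sequence. -/
lemma exists_fair (ω : PopSpace ends)
    (H : ∀ l, IsLegal ends ω l → ∃ v, IsSink ends (orientAfter ends ω l) v) :
    ∃ s : ℕ → V, IsLegalInf ends ω s ∧ Fair ends ω s := by
  classical
  obtain ⟨v₀, -⟩ := H ([]) (isLegal_nil ω)
  set R : ℕ → List V := rounds ends ω with hR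
  have hlegal : ∀ k, IsLegal ends ω (R k) := by
    intro k
    induction k with
    | zero => exact isLegal_nil ω
    | succ k ih => exact ext_legal ω _ _ ih
  have hmono : ∀ {j k : ℕ}, j ≤ k → R j <+: R k := by
    intro j k hjk
    induction k with
    | zero => rw [Nat.le_zero.1 hjk]
    | succ k ih =>
      rcases Nat.eq_or_lt_of_le hjk with rfl | hlt
      · exact List.prefix_refl _
      · exact (ih (by omega)).trans (ext_prefix ω _ _)
  have hlen : ∀ k, k ≤ (R k).length := by
    intro k
    induction k with
    | zero => exact Nat.zero_le _
    | succ k ih =>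
      have hgrow : (R k).length < (R (k + 1)).length := by
        obtain ⟨v, hv⟩ := H (R k) (hlegal k)
        exact ext_grows ω _ _ ⟨v, Finset.mem_toList.2 (Finset.mem_univ v), hv⟩
      omega
  set s : ℕ → V := fun j => (R (j + 1)).getD j v₀ with hs
  have hget : ∀ (m j : ℕ), j < (R m).length → (R m).getD j v₀ = s j := by
    intro m j h
    rcases le_total m (j + 1) with hc | hc
    · exact (prefix_getD (hmono hc) h v₀).symm
    · show _ = (R (j + 1)).getD j v₀
      exact prefix_getD (hmono hc) (by have := hlen (j + 1); omega) v₀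
  have hRk : ∀ k, R k = prefixSeq s (R k).length := by
    intro k
    refine List.ext_get ?_ ?_
    · rw [prefixSeq_length]
    · intro j h1 h2
      rw [prefixSeq_get, ← hget k j h1, List.getD_eq_getElem?_getD,
        List.getElem?_eq_getElem h1]
      rfl
  have hpre : ∀ n, prefixSeq s n = (R n).take n := by
    intro n
    rw [hRk n, prefixSeq_take s (hlen n)]
  have hleg : IsLegalInf ends ω s := by
    rw [isLegalInf_iff]
    intro n
    rw [hpre n]
    exact isLegal_take (hlegal n) n
  refine ⟨s, hleg, ?_⟩
  intro k v hv
  by_contra hno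
  push_neg at hno
  -- v remains a sink up to the end of round k, and is then popped during round k+1
  set L := (R k).length with hL
  have hkL : k ≤ L := hlen k
  have hvL : IsSink ends (orientAfter ends ω (prefixSeq s L)) v :=
    persist_seq_from hleg hv L hkL (fun j h1 _ => hno j h1)
  rw [← hRk k] at hvL
  obtain ⟨j, hj1, hj2, hj3⟩ := ext_captures ω ((Finset.univ : Finset V).toList) (R k) v
    (Finset.mem_toList.2 (Finset.mem_univ v)) (hlegal k) hvL
  have hsj : s j = v := by
    rw [← hget (k + 1) j hj2]
    exact hj3 v₀
  exact hno j (le_trans hkL hj1) hsj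

theorem maximal_popping_sequences_form_equiv_class'
    (ω : PopSpace ends) :
    ∃ p : PopSeq V, IsMaximalSeq ends ω p ∧
      ∀ q : PopSeq V, IsMaximalSeq ends ω q ↔ SeqEqv ends p q := by
  by_cases hfin : ∃ l : List V, IsMaximal ends ω l
  · obtain ⟨l₀, hl₀⟩ := hfin
    refine ⟨.fin l₀, hl₀, ?_⟩
    intro q
    cases q with
    | fin l =>
      show IsMaximal ends ω l ↔ ListEqv ends l₀ l
      exact ⟨fun h => maximal_listEqv hl₀ h, fun h => listEqv_maximal h hl₀⟩
    | inf u =>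
      show IsLegalInf ends ω u ↔ False
      exact iff_of_false (fun h => not_legalInf_of_maximal hl₀ h) not_false
  · have H : ∀ l, IsLegal ends ω l → ∃ v, IsSink ends (orientAfter ends ω l) v := by
      intro l hl
      by_contra h
      push_neg at h
      exact hfin ⟨l, isMaximal_iff.2 ⟨hl, h⟩⟩
    obtain ⟨s, hsleg, hsfair⟩ := exists_fair ω H
    refine ⟨.inf s, hsleg, ?_⟩
    intro q
    cases q with
    | fin l =>
      show IsMaximal ends ω l ↔ False
      exact iff_of_false (fun h => hfin ⟨l, h⟩) not_false
    | inf u =>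
      show IsLegalInf ends ω u ↔ InfEqv ends s u
      constructor
      · intro hu n
        obtain ⟨t, hchain, hpre⟩ := fair_absorbs (prefixSeq u n) ω s hsleg hsfair
          (isLegalInf_iff.1 hu n)
        rw [prefixSeq_length] at hpre
        exact ⟨t, hchain, prefixSeq_eq_iff.1 hpre⟩
      · intro hequiv
        apply isLegalInf_of_prefixes
        intro n
        obtain ⟨t, hchain, hagree⟩ := hequiv n
        refine ⟨n, le_refl n, ?_⟩
        have ht : IsLegalInf ends ω t := infChain_legal hchain hsleg
        rw [← prefixSeq_congr (fun i hi => (hagree i hi))]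
        exact isLegalInf_iff.1 ht n

end Proof3

/-- For any fixed stack configuration `ω`, the set of maximal popping
sequences for `ω` is exactly one equivalence class under the relation generated by
transposing consecutive entries that are not neighbors in `G`. -/
theorem maximal_popping_sequences_form_equiv_class
    (ends : E → Sym2 V) (hloop : OneLoopPerVertex ends) (ω : PopSpace ends) :
    ∃ p : PopSeq V, IsMaximalSeq ends ω p ∧
      ∀ q : PopSeq V, IsMaximalSeq ends ω q ↔ SeqEqv ends p q :=
  maximal_popping_sequences_form_equiv_class' ω

end SinkPopping
end
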